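/- Let E be a real Banach space, V : E → ℝ a lower semicontinuous convex function, and K ⊆ E a compact set such that V is bounded above on K. Then the restriction of V to K is Lipschitz (with respect to the metric induced by the norm). -/
import Mathlib

open Metric Set

/-- A lower semicontinuous convex function on a Banach space is locally Lipschitz. -/
theorem lsc_convex_locallyLipschitzOn_univ
    {E : Type*} [NormedAddCommGroup E] [NormedSpace ℝ E] [CompleteSpace E]
    {V : E → ℝ} (hconv : ConvexOn ℝ Set.univ V) (hlsc : LowerSemicontinuous V) :
    LocallyLipschitzOn Set.univ V := by
  -- Baire category: some sublevel set has nonempty interior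
  have hcl : ∀ n : ℕ, IsClosed {x : E | V x ≤ (n : ℝ)} := fun n =>
    hlsc.isClosed_preimage (n : ℝ)
  have hun : ⋃ n : ℕ, {x : E | V x ≤ (n : ℝ)} = univ := by
    ext x
    simp only [mem_iUnion, mem_setOf_eq, mem_univ, iff_true]
    exact ⟨⌈V x⌉₊, Nat.le_ceil _⟩
  obtain ⟨n, x₀, hx₀⟩ := nonempty_interior_of_iUnion_of_closed hcl hun
  have hbdd : ∃ x₀ ∈ (univ : Set E), (nhds x₀).IsBoundedUnder (· ≤ ·) V := by
    refine ⟨x₀, mem_univ _, (n : ℝ), Filter.eventually_map.2 ?_⟩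
    filter_upwards [isOpen_interior.mem_nhds hx₀] with y hy
    exact (interior_subset hy : y ∈ {x : E | V x ≤ (n : ℝ)})
  exact ((hconv.continuousOn_tfae isOpen_univ ⟨x₀, mem_univ _⟩).out 3 0).mp hbdd

/-- A lower semicontinuous convex function on a real Banach space which is
bounded above on a compact set `K` is Lipschitz on `K`. -/
theorem lsc_convex_lipschitzOn_of_compact
    {E : Type*} [NormedAddCommGroup E] [NormedSpace ℝ E] [CompleteSpace E]
    {V : E → ℝ} (hconv : ConvexOn ℝ Set.univ V) (hlsc : LowerSemicontinuous V)
    {K : Set E} (hK : IsCompact K)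
    {C : ℝ} (hC : ∀ x ∈ K, V x ≤ C) :
    ∃ L : NNReal, LipschitzOnWith L V K := by
  rcases K.eq_empty_or_nonempty with rfl | hKne
  · exact ⟨1, lipschitzOnWith_empty 1 V⟩
  have hLL := lsc_convex_locallyLipschitzOn_univ hconv hlsc
  -- local Lipschitz data on balls
  have Hloc : ∀ x : E, ∃ (L : NNReal) (ε : ℝ), 0 < ε ∧ LipschitzOnWith L V (ball x ε) := by
    intro x
    obtain ⟨L, t, ht, hl⟩ := hLL (mem_univ x)
    rw [nhdsWithin_univ] at ht
    obtain ⟨ε, hε, hball⟩ := Metric.mem_nhds_iff.1 ht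
    exact ⟨L, ε, hε, hl.mono hball⟩
  choose L ε hε hL using Hloc
  -- V is continuous, so bounded on K
  have hcont : ContinuousOn V K := (hLL.continuousOn).mono (subset_univ K)
  obtain ⟨M, hM⟩ := hK.exists_bound_of_continuousOn hcont
  -- finite subcover by half-balls
  obtain ⟨t, htK, htcov⟩ := hK.elim_nhds_subcover (fun x => ball x (ε x / 2))
    (fun x _ => ball_mem_nhds x (by linarith [hε x]))
  have htne : t.Nonempty := by
    obtain ⟨x, hx⟩ := hKne
    obtain ⟨i, hi, _⟩ := mem_iUnion₂.1 (htcov hx)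
    exact ⟨i, hi⟩
  set δ : ℝ := t.inf' htne (fun i => ε i / 2) with hδdef
  have hδpos : 0 < δ := by
    rw [hδdef]
    apply (Finset.lt_inf'_iff _).2
    intro i _
    linarith [hε i]
  set c : NNReal := t.sup L ⊔ Real.toNNReal (2 * M / δ) with hcdef
  refine ⟨c, LipschitzOnWith.of_dist_le_mul fun x hx y hy => ?_⟩
  rcases lt_or_ge (dist x y) δ with h | h
  · -- close case: both points in a common ball
    obtain ⟨i, hi, hxi⟩ := mem_iUnion₂.1 (htcov hx)
    have hδle : δ ≤ ε i / 2 := Finset.inf'_le _ hi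
    have hxi' : x ∈ ball i (ε i) := by
      rw [mem_ball] at hxi ⊢; linarith [hε i]
    have hyi : y ∈ ball i (ε i) := by
      rw [mem_ball] at hxi ⊢
      calc dist y i ≤ dist y x + dist x i := dist_triangle _ _ _
        _ < δ + ε i / 2 := by rw [dist_comm]; exact add_lt_add h hxi
        _ ≤ ε i := by linarith
    calc dist (V x) (V y) ≤ (L i : ℝ) * dist x y := (hL i).dist_le_mul x hxi' y hyi
      _ ≤ (c : ℝ) * dist x y := by
          apply mul_le_mul_of_nonneg_right _ dist_nonneg
          exact_mod_cast le_trans (Finset.le_sup hi) (le_sup_left (b := Real.toNNReal (2 * M / δ)))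
  · -- far case: use boundedness
    have hMx : ‖V x‖ ≤ M := hM x hx
    have hMy : ‖V y‖ ≤ M := hM y hy
    have hM0 : 0 ≤ M := le_trans (norm_nonneg _) hMx
    have h1 : dist (V x) (V y) ≤ 2 * M := by
      rw [Real.dist_eq]
      calc |V x - V y| ≤ |V x| + |V y| := abs_sub _ _
        _ ≤ M + M := add_le_add hMx hMy
        _ = 2 * M := by ring
    have h2 : (2 * M / δ : ℝ) ≤ (c : ℝ) := by
      calc (2 * M / δ : ℝ) ≤ Real.toNNReal (2 * M / δ) := Real.le_coe_toNNReal _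
        _ ≤ (c : ℝ) := by exact_mod_cast le_sup_right (a := t.sup L)
    calc dist (V x) (V y) ≤ 2 * M := h1
      _ = (2 * M / δ) * δ := by field_simp
      _ ≤ (2 * M / δ) * dist x y := by
          apply mul_le_mul_of_nonneg_left h (by positivity)
      _ ≤ (c : ℝ) * dist x y := mul_le_mul_of_nonneg_right h2 dist_nonneg
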